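/- Define p_z(\lambda) = \frac{-1}{\sqrt{2N} y}(cN|z|^2 - bx + a) and q_z(\lambda) = \frac{-1}{\sqrt{2N}}(cNz^2 - bz + a) for z = x + iy in the upper half plane and \lambda = \begin{pmatrix} b/2N & -a/N \\ c & -b/2N \end{pmatrix}. Then for all \gamma \in SL_2(\mathbb{R}) acting by \gamma.\lambda = \gamma\lambda\gamma^{-1} and fractional linear transformation on z, one has q_{\gamma z}(\gamma.\lambda) = j(\gamma, z)^{-2} q_z(\lambda), where j(\gamma, z) = cz + d for \gamma = \begin{pmatrix} a & b \\ c & d \end{pmatrix}. -/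
import Mathlib


open Matrix

/-- For a trace-zero real matrix `λ = (b/2N, -a/N; c, -b/2N)` (so that
`b = 2N λ₀₀`, `a = -N λ₀₁`, `c = λ₁₀`) and `z ∈ ℍ`, the quantity
`q_z(λ) = -(1/√(2N)) (cN z² - b z + a)`. -/
noncomputable def qz (N : ℕ) (z : ℂ) (lam : Matrix (Fin 2) (Fin 2) ℝ) : ℂ :=
  (-1 / (Real.sqrt (2 * N) : ℂ)) *
    ((lam 1 0 : ℝ) * (N : ℂ) * z ^ 2 - (2 * (N : ℝ) * lam 0 0 : ℝ) * z + (-(N : ℝ) * lam 0 1 : ℝ))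

/-- For `γ = (p, q; r, s) ∈ SL₂(ℝ)` acting by conjugation on trace-zero
matrices and by fractional linear transformations on `ℍ`,
`q_{γz}(γ.λ) = j(γ,z)⁻² q_z(λ)` where `j(γ,z) = rz + s`. -/
theorem qz_equivariance (N : ℕ) (hN : 0 < N) (p q r s : ℝ) (hdet : p * s - q * r = 1)
    (z : ℂ) (hz : 0 < z.im) (lam : Matrix (Fin 2) (Fin 2) ℝ) (hlam : lam.trace = 0) :
    qz N (((p : ℂ) * z + q) / ((r : ℂ) * z + s))
        (!![p, q; r, s] * lam * !![s, -q; -r, p])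
      = ((r : ℂ) * z + s) ^ (-2 : ℤ) * qz N z lam := by
  have hden : (r : ℂ) * z + s ≠ 0 := by
    intro h
    rcases eq_or_ne r 0 with hr | hr
    · have hs : (s : ℂ) = 0 := by simpa [hr] using h
      have : s = 0 := by exact_mod_cast hs
      simp [hr, this] at hdet
    · have := congrArg Complex.im h
      simp [Complex.add_im, Complex.mul_im, Complex.ofReal_im, Complex.ofReal_re] at this
      rcases this with h1 | h1
      · exact hr h1
      · exact absurd h1 (ne_of_gt hz)
  have h11 : lam 1 1 = -lam 0 0 := by
    have := hlam
    simp [Matrix.trace, Matrix.diag, Fin.sum_univ_two] at this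
    linarith
  have hdetC : (p : ℂ) * s - q * r = 1 := by exact_mod_cast hdet
  have hd2 : ((r : ℂ) * z + s) ^ 2 ≠ 0 := pow_ne_zero 2 hden
  rw [_root_.zpow_neg, eq_inv_mul_iff_mul_eq₀ (by push_cast; exact_mod_cast hd2)]
  simp only [qz, Matrix.mul_apply, Fin.sum_univ_two, Matrix.cons_val', Matrix.cons_val_zero,
    Matrix.cons_val_one, Matrix.head_cons, Matrix.head_fin_const, Matrix.empty_val',
    Matrix.cons_val_fin_one, Matrix.of_apply, h11]
  push_cast
  set S : ℂ := (Real.sqrt (2 * N) : ℂ) with hSdef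
  have key : ((r : ℂ) * z + s) ^ 2 *
      ((((r:ℂ) * (lam 0 0 : ℝ) + s * (lam 1 0 : ℝ)) * s + ((r:ℂ) * (lam 0 1 : ℝ) + s * -(lam 0 0 : ℝ)) * -r) * (N:ℂ) *
            (((p:ℂ) * z + q) / ((r:ℂ) * z + s)) ^ 2 -
          2 * (N:ℂ) * (((p:ℂ) * (lam 0 0 : ℝ) + q * (lam 1 0 : ℝ)) * s + ((p:ℂ) * (lam 0 1 : ℝ) + q * -(lam 0 0 : ℝ)) * -r) *
            (((p:ℂ) * z + q) / ((r:ℂ) * z + s)) +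
        -(N:ℂ) * (((p:ℂ) * (lam 0 0 : ℝ) + q * (lam 1 0 : ℝ)) * -q + ((p:ℂ) * (lam 0 1 : ℝ) + q * -(lam 0 0 : ℝ)) * p))
      = ((lam 1 0 : ℝ) * (N:ℂ) * z ^ 2 - 2 * (N:ℂ) * (lam 0 0 : ℝ) * z + -(N:ℂ) * (lam 0 1 : ℝ)) := by
    have hdinv : ((r:ℂ)*z+s) * ((r:ℂ)*z+s)⁻¹ = 1 := mul_inv_cancel₀ hden
    linear_combination
      ((((r:ℂ) * (lam 0 0 : ℝ) + s * (lam 1 0 : ℝ)) * s + ((r:ℂ) * (lam 0 1 : ℝ) + s * -(lam 0 0 : ℝ)) * -r)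
          * (N:ℂ) * ((p:ℂ)*z+q)^2 * (((r:ℂ)*z+s)*((r:ℂ)*z+s)⁻¹ + 1)
        - 2*(N:ℂ) * (((p:ℂ) * (lam 0 0 : ℝ) + q * (lam 1 0 : ℝ)) * s + ((p:ℂ) * (lam 0 1 : ℝ) + q * -(lam 0 0 : ℝ)) * -r)
          * ((p:ℂ)*z+q) * ((r:ℂ)*z+s)) * hdinv
      + (((p:ℂ)*s - q*r + 1) *
          ((lam 1 0 : ℝ) * (N:ℂ) * z^2 - 2*(N:ℂ)*(lam 0 0 : ℝ)*z + -(N:ℂ)*(lam 0 1 : ℝ))) * hdetC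
  rw [mul_left_comm]
  exact congrArg (fun t => -1/S * t) key
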